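/- With probability at least 1 − δ, the doubly robust gradient satisfies ‖G_DR‖₂ ≤ √(2·E[‖G(X_1, f̂(X_1)) − E[G(X_1, f̂(X_1))]‖₂²] / ((m+n)·δ)) + √(2·E[‖D_1 − E[D_1]‖₂²] / (n·δ)), where D_1 = G(X_1, Y_1) − G(X_1, f̂(X_1)). -/

import Mathlib

open MeasureTheory ProbabilityTheory Finset
open scoped ENNReal

set_option linter.unusedSectionVars false

section Helpers
variable {Ω : Type*} [MeasurableSpace Ω] {μ : Measure Ω} [IsProbabilityMeasure μ]

lemma integrable_mul_of_memL2' {f g : Ω → ℝ} (hf : MemLp f 2 μ) (hg : MemLp g 2 μ) :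
    Integrable (fun ω => f ω * g ω) μ := by
  have h : MemLp (f • g) 1 μ :=
    hg.smul hf
  exact memLp_one_iff_integrable.mp h

lemma norm_sq_eq_sum' {d : ℕ} (v : EuclideanSpace ℝ (Fin d)) :
    ‖v‖ ^ 2 = ∑ k, (v k) ^ 2 := by
  rw [EuclideanSpace.norm_eq, Real.sq_sqrt (by positivity)]
  simp [Real.norm_eq_abs, sq_abs]

lemma sum_centered_sq' {d : ℕ} {ι : Type*} [DecidableEq ι]
    (W : ι → Ω → EuclideanSpace ℝ (Fin d)) (s : Finset ι) (i₀ : ι)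
    (hW2 : ∀ i, MemLp (W i) 2 μ)
    (hindep : ∀ i j, i ≠ j → IndepFun (W i) (W j) μ)
    (hid : ∀ i, IdentDistrib (W i) (W i₀) μ μ)
    (hmean : (∫ ω, W i₀ ω ∂μ) = 0) :
    ∫ ω, ‖∑ i ∈ s, W i ω‖ ^ 2 ∂μ = s.card * ∫ ω, ‖W i₀ ω‖ ^ 2 ∂μ := by
  have hprojmeas : ∀ k : Fin d, Measurable fun v : EuclideanSpace ℝ (Fin d) => v k :=
    fun k => (EuclideanSpace.proj (𝕜 := ℝ) k).continuous.measurable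
  have hc2 : ∀ i k, MemLp (fun ω => W i ω k) 2 μ := fun i k =>
    (EuclideanSpace.proj (𝕜 := ℝ) k).comp_memLp' (hW2 i)
  have hidk : ∀ i (k : Fin d), IdentDistrib (fun ω => W i ω k) (fun ω => W i₀ ω k) μ μ :=
    fun i k => (hid i).comp (hprojmeas k)
  have hmeank : ∀ i (k : Fin d), (∫ ω, W i ω k ∂μ) = 0 := by
    intro i k
    rw [(hidk i k).integral_eq]
    have h := (EuclideanSpace.proj (𝕜 := ℝ) k).integral_comp_comm
      ((hW2 i₀).integrable one_le_two)
    rw [show (fun ω => W i₀ ω k) = fun ω => EuclideanSpace.proj (𝕜 := ℝ) k (W i₀ ω) from rfl,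
      h, hmean]
    simp
  have hVk : ∀ (k : Fin d) i, (∫ ω, (W i ω k) ^ 2 ∂μ) = ∫ ω, (W i₀ ω k) ^ 2 ∂μ := fun k i =>
    ((hidk i k).comp ((continuous_pow 2).measurable)).integral_eq
  have key : ∀ k : Fin d, ∫ ω, (∑ i ∈ s, W i ω k) ^ 2 ∂μ = s.card * ∫ ω, (W i₀ ω k) ^ 2 ∂μ := by
    intro k
    have hint : ∀ i j : ι, Integrable (fun ω => W i ω k * W j ω k) μ :=
      fun i j => integrable_mul_of_memL2' (hc2 i k) (hc2 j k)
    calc ∫ ω, (∑ i ∈ s, W i ω k) ^ 2 ∂μ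
        = ∫ ω, ∑ i ∈ s, ∑ j ∈ s, W i ω k * W j ω k ∂μ := by
          congr 1; funext ω; rw [sq, Finset.sum_mul_sum]
      _ = ∑ i ∈ s, ∑ j ∈ s, ∫ ω, W i ω k * W j ω k ∂μ := by
          rw [integral_finset_sum _ fun i _ => integrable_finset_sum _ fun j _ => hint i j]
          exact Finset.sum_congr rfl fun i _ => integral_finset_sum _ fun j _ => hint i j
      _ = ∑ i ∈ s, ∑ j ∈ s, if i = j then ∫ ω, (W i₀ ω k) ^ 2 ∂μ else 0 := by
          refine Finset.sum_congr rfl fun i _ => Finset.sum_congr rfl fun j _ => ?_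
          by_cases hij : i = j
          · subst hij
            rw [if_pos rfl, ← hVk k i]
            congr 1; funext ω; ring
          · rw [if_neg hij]
            have h := ((hindep i j hij).comp (hprojmeas k) (hprojmeas k)).integral_fun_mul_eq_mul_integral
              (hc2 i k).aestronglyMeasurable (hc2 j k).aestronglyMeasurable
            have h2 : ∫ ω, W i ω k * W j ω k ∂μ
                = (∫ ω, W i ω k ∂μ) * ∫ ω, W j ω k ∂μ := by
              simpa [Pi.mul_apply] using h
            rw [h2, hmeank i k, hmeank j k, mul_zero]
      _ = ∑ i ∈ s, ∫ ω, (W i₀ ω k) ^ 2 ∂μ := by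
          refine Finset.sum_congr rfl fun i hi => ?_
          simp [Finset.sum_ite_eq, hi]
      _ = s.card * ∫ ω, (W i₀ ω k) ^ 2 ∂μ := by rw [Finset.sum_const, nsmul_eq_mul]
  calc ∫ ω, ‖∑ i ∈ s, W i ω‖ ^ 2 ∂μ
      = ∫ ω, ∑ k : Fin d, (∑ i ∈ s, W i ω k) ^ 2 ∂μ := by
        congr 1; funext ω
        rw [norm_sq_eq_sum']
        refine Finset.sum_congr rfl fun k _ => ?_
        exact congrArg (· ^ 2)
          (map_sum (EuclideanSpace.proj (𝕜 := ℝ) k) (fun i => W i ω) s)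
    _ = ∑ k : Fin d, ∫ ω, (∑ i ∈ s, W i ω k) ^ 2 ∂μ := by
        refine integral_finset_sum _ fun k _ => ?_
        have h := (memLp_finset_sum' s fun i (_ : i ∈ s) => hc2 i k).integrable_sq
        simpa [Finset.sum_apply] using h
    _ = ∑ k : Fin d, s.card * ∫ ω, (W i₀ ω k) ^ 2 ∂μ := Finset.sum_congr rfl fun k _ => key k
    _ = s.card * ∑ k : Fin d, ∫ ω, (W i₀ ω k) ^ 2 ∂μ := by rw [Finset.mul_sum]
    _ = s.card * ∫ ω, ∑ k : Fin d, (W i₀ ω k) ^ 2 ∂μ := by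
        rw [integral_finset_sum _ fun k _ => (hc2 i₀ k).integrable_sq]
    _ = s.card * ∫ ω, ‖W i₀ ω‖ ^ 2 ∂μ := by
        congr 1; congr 1; funext ω; rw [norm_sq_eq_sum']

lemma markov_sqrt' {E : Type*} [NormedAddCommGroup E]
    {F : Ω → E} (hF : MemLp F 2 μ) {c : ℝ} (hc : 0 < c) :
    μ {ω | Real.sqrt ((∫ ω', ‖F ω'‖ ^ 2 ∂μ) * c) < ‖F ω‖} ≤ ENNReal.ofReal c⁻¹ := by
  set V := ∫ ω', ‖F ω'‖ ^ 2 ∂μ with hV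
  have hint : Integrable (fun ω => ‖F ω‖ ^ 2) μ := hF.norm.integrable_sq
  have hVnn : 0 ≤ V := integral_nonneg fun ω => sq_nonneg _
  rcases eq_or_lt_of_le hVnn with hV0 | hVpos
  · have hz : ∀ᵐ ω ∂μ, ‖F ω‖ ^ 2 = 0 := by
      have h := (integral_eq_zero_iff_of_nonneg (fun ω => sq_nonneg (‖F ω‖)) hint).mp hV0.symm
      filter_upwards [h] with ω hω using hω
    have hzero : μ {ω | Real.sqrt (V * c) < ‖F ω‖} = 0 := by
      rw [measure_eq_zero_iff_ae_notMem]
      filter_upwards [hz] with ω hω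
      have h0 : ‖F ω‖ = 0 := by
        have := sq_abs (‖F ω‖); nlinarith [norm_nonneg (F ω)]
      simp [Set.mem_setOf_eq, h0, ← hV0]
    simp [hzero]
  · have htpos : 0 < Real.sqrt (V * c) := Real.sqrt_pos.mpr (mul_pos hVpos hc)
    have hsub : {ω | Real.sqrt (V * c) < ‖F ω‖} ⊆ {ω | V * c ≤ ‖F ω‖ ^ 2} := by
      intro ω hω
      simp only [Set.mem_setOf_eq] at hω ⊢
      have h1 : Real.sqrt (V * c) ^ 2 ≤ ‖F ω‖ ^ 2 := by
        have := hω.le; nlinarith [htpos.le]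
      rwa [Real.sq_sqrt (mul_pos hVpos hc).le] at h1
    refine (measure_mono hsub).trans ?_
    have hm := mul_meas_ge_le_integral_of_nonneg
      (Filter.Eventually.of_forall fun ω => sq_nonneg (‖F ω‖)) hint (V * c)
    have hfin : μ {ω | V * c ≤ ‖F ω‖ ^ 2} ≠ ⊤ := measure_ne_top μ _
    have h2 : (μ {ω | V * c ≤ ‖F ω‖ ^ 2}).toReal ≤ c⁻¹ := by
      have hpos := mul_pos hVpos hc
      rw [← le_div_iff₀' hpos] at hm
      simp only [measureReal_def] at hm
      have heq : V / (V * c) = c⁻¹ := by field_simp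
      linarith [hm]
    calc μ {ω | V * c ≤ ‖F ω‖ ^ 2}
        = ENNReal.ofReal (μ {ω | V * c ≤ ‖F ω‖ ^ 2}).toReal := (ENNReal.ofReal_toReal hfin).symm
      _ ≤ ENNReal.ofReal c⁻¹ := ENNReal.ofReal_le_ofReal h2

lemma mean_dev_bound' {d : ℕ} {ι : Type*} [DecidableEq ι]
    (Z : ι → Ω → EuclideanSpace ℝ (Fin d)) (s : Finset ι) (i₀ : ι) {c : ℝ} (hc : 0 < c)
    (hcard : 0 < s.card)
    (hZ2 : ∀ i, MemLp (Z i) 2 μ)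
    (hindep : ∀ i j, i ≠ j → IndepFun (Z i) (Z j) μ)
    (hid : ∀ i, IdentDistrib (Z i) (Z i₀) μ μ) :
    μ {ω | Real.sqrt ((∫ ω', ‖Z i₀ ω' - ∫ ω'', Z i₀ ω'' ∂μ‖ ^ 2 ∂μ) * c / s.card)
        < ‖(s.card : ℝ)⁻¹ • (∑ i ∈ s, Z i ω) - ∫ ω', Z i₀ ω' ∂μ‖}
      ≤ ENNReal.ofReal c⁻¹ := by
  set a := ∫ ω, Z i₀ ω ∂μ with ha
  set W : ι → Ω → EuclideanSpace ℝ (Fin d) := fun i ω => Z i ω - a with hWdef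
  have hcard0 : ((s.card : ℝ)) ≠ 0 := Nat.cast_ne_zero.mpr hcard.ne'
  have hsubmeas : Measurable fun v : EuclideanSpace ℝ (Fin d) => v - a :=
    measurable_id.sub measurable_const
  have hW2 : ∀ i, MemLp (W i) 2 μ := fun i => (hZ2 i).sub (memLp_const a)
  have hWindep : ∀ i j, i ≠ j → IndepFun (W i) (W j) μ := fun i j hij =>
    (hindep i j hij).comp hsubmeas hsubmeas
  have hWid : ∀ i, IdentDistrib (W i) (W i₀) μ μ := fun i => (hid i).comp hsubmeas
  have hWmean : (∫ ω, W i₀ ω ∂μ) = 0 := by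
    rw [show W i₀ = fun ω => Z i₀ ω - a from rfl,
      integral_sub ((hZ2 i₀).integrable one_le_two) (integrable_const a)]
    simp [ha]
  have hsum := sum_centered_sq' W s i₀ hW2 hWindep hWid hWmean
  set F : Ω → EuclideanSpace ℝ (Fin d) := fun ω => (s.card : ℝ)⁻¹ • ∑ i ∈ s, W i ω with hFdef
  have hF2 : MemLp F 2 μ :=
    (memLp_finset_sum s fun i (_ : i ∈ s) => hW2 i).const_smul ((s.card : ℝ)⁻¹)
  have hVF : ∫ ω, ‖F ω‖ ^ 2 ∂μ = (∫ ω, ‖W i₀ ω‖ ^ 2 ∂μ) / s.card := by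
    have hpt : (fun ω => ‖F ω‖ ^ 2)
        = fun ω => ((s.card : ℝ)⁻¹) ^ 2 * ‖∑ i ∈ s, W i ω‖ ^ 2 := by
      funext ω
      rw [hFdef]
      rw [norm_smul, mul_pow]
      congr 1
      rw [Real.norm_eq_abs, sq_abs]
    rw [hpt, integral_const_mul, hsum]
    field_simp
  have hmar := markov_sqrt' hF2 hc
  have hset : {ω | Real.sqrt ((∫ ω', ‖Z i₀ ω' - a‖ ^ 2 ∂μ) * c / s.card)
        < ‖(s.card : ℝ)⁻¹ • (∑ i ∈ s, Z i ω) - a‖}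
      = {ω | Real.sqrt ((∫ ω', ‖F ω'‖ ^ 2 ∂μ) * c) < ‖F ω‖} := by
    ext ω
    have h1 : (s.card : ℝ)⁻¹ • (∑ i ∈ s, Z i ω) - a = F ω := by
      rw [hFdef]
      simp only [hWdef]
      rw [Finset.sum_sub_distrib, Finset.sum_const, smul_sub]
      congr 1
      rw [← Nat.cast_smul_eq_nsmul ℝ, smul_smul, inv_mul_cancel₀ hcard0, one_smul]
    have h2 : (∫ ω', ‖Z i₀ ω' - a‖ ^ 2 ∂μ) * c / s.card = (∫ ω', ‖F ω'‖ ^ 2 ∂μ) * c := by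
      rw [hVF]
      ring
    rw [Set.mem_setOf_eq, Set.mem_setOf_eq, h1, h2]
  rw [hset]
  exact hmar


lemma filter_card_eq (m n : ℕ) :
    (Finset.univ.filter fun i : Fin (m + n) => m ≤ (i : ℕ)).card = n := by
  classical
  calc (Finset.univ.filter fun i : Fin (m + n) => m ≤ (i : ℕ)).card
      = ∑ i : Fin (m + n), if m ≤ (i : ℕ) then 1 else 0 := Finset.card_filter _ _
    _ = ∑ i ∈ Finset.range (m + n), if m ≤ i then 1 else 0 :=
        Fin.sum_univ_eq_sum_range (fun i => if m ≤ i then 1 else 0) (m + n)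
    _ = ((Finset.range (m + n)).filter fun i => m ≤ i).card := (Finset.card_filter _ _).symm
    _ = n := by
        have h : (Finset.range (m + n)).filter (fun i => m ≤ i) = Finset.Ico m (m + n) := by
          ext x
          simp only [Finset.mem_filter, Finset.mem_range, Finset.mem_Ico]
          tauto
        rw [h, Nat.card_Ico]
        omega

lemma final_helper {d m n : ℕ} (hm : 0 < m) (hn : 0 < n)
    {δ : ℝ} (hδ0 : 0 < δ) (hδ1 : δ < 1)
    (Zf ZD : Fin (m + n) → Ω → EuclideanSpace ℝ (Fin d)) (i₀ : Fin (m + n))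
    (hZfm : ∀ i, Measurable (Zf i)) (hZDm : ∀ i, Measurable (ZD i))
    (hZf2 : ∀ i, MemLp (Zf i) 2 μ) (hZD2 : ∀ i, MemLp (ZD i) 2 μ)
    (hindf : ∀ i j, i ≠ j → IndepFun (Zf i) (Zf j) μ)
    (hindD : ∀ i j, i ≠ j → IndepFun (ZD i) (ZD j) μ)
    (hidf : ∀ i, IdentDistrib (Zf i) (Zf i₀) μ μ)
    (hidD : ∀ i, IdentDistrib (ZD i) (ZD i₀) μ μ)
    (hab : (∫ ω, Zf i₀ ω ∂μ) + (∫ ω, ZD i₀ ω ∂μ) = 0) :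
    ENNReal.ofReal (1 - δ) ≤
      μ {ω | ‖((m + n : ℝ))⁻¹ • (∑ i : Fin (m + n), Zf i ω)
          + ((n : ℝ))⁻¹ • ∑ i ∈ Finset.univ.filter (fun i : Fin (m + n) => m ≤ (i : ℕ)), ZD i ω‖
        ≤ Real.sqrt (2 * (∫ ω, ‖Zf i₀ ω - ∫ ω', Zf i₀ ω' ∂μ‖ ^ 2 ∂μ) / ((m + n : ℝ) * δ))
          + Real.sqrt (2 * (∫ ω, ‖ZD i₀ ω - ∫ ω', ZD i₀ ω' ∂μ‖ ^ 2 ∂μ) / ((n : ℝ) * δ))} := by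
  classical
  set a := ∫ ω, Zf i₀ ω ∂μ with ha
  set b := ∫ ω, ZD i₀ ω ∂μ with hb
  set σf := ∫ ω, ‖Zf i₀ ω - a‖ ^ 2 ∂μ with hσf
  set σD := ∫ ω, ‖ZD i₀ ω - b‖ ^ 2 ∂μ with hσD
  set t₁ := Real.sqrt (2 * σf / ((m + n : ℝ) * δ)) with ht₁
  set t₂ := Real.sqrt (2 * σD / ((n : ℝ) * δ)) with ht₂
  set S := Finset.univ.filter (fun i : Fin (m + n) => m ≤ (i : ℕ)) with hS
  have hδne : δ ≠ 0 := hδ0.ne'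
  have hδ2 : (0:ℝ) < 2 / δ := by positivity
  have hmn0 : (0:ℝ) < (m : ℝ) + n := by positivity
  have hn0 : (0:ℝ) < (n : ℝ) := by positivity
  have hScard : S.card = n := filter_card_eq m n
  have hσfnn : 0 ≤ σf := integral_nonneg fun ω => sq_nonneg _
  have hσDnn : 0 ≤ σD := integral_nonneg fun ω => sq_nonneg _
  -- the two deviation bounds
  have hb1 := mean_dev_bound' (μ := μ) Zf Finset.univ i₀ hδ2 (by simp; omega) hZf2 hindf hidf
  have hb2 := mean_dev_bound' (μ := μ) ZD S i₀ hδ2 (by rw [hScard]; omega) hZD2 hindD hidD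
  rw [← ha, ← hσf] at hb1
  rw [← hb, ← hσD] at hb2
  rw [hScard] at hb2
  simp only [Finset.card_univ, Fintype.card_fin] at hb1
  push_cast at hb1
  rw [show σf * (2 / δ) / ((m:ℝ) + n) = 2 * σf / (((m:ℝ) + n) * δ) by
    field_simp] at hb1
  rw [show σD * (2 / δ) / (n:ℝ) = 2 * σD / ((n:ℝ) * δ) by field_simp] at hb2
  rw [← ht₁] at hb1
  rw [← ht₂] at hb2
  -- measurability of the good set
  have hAmeas : Measurable fun ω => ((m + n : ℝ))⁻¹ • (∑ i : Fin (m + n), Zf i ω) :=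
    (Finset.measurable_sum Finset.univ fun i _ => hZfm i).const_smul ((m + n : ℝ))⁻¹
  have hBmeas : Measurable fun ω => ((n : ℝ))⁻¹ • ∑ i ∈ S, ZD i ω :=
    (Finset.measurable_sum S fun i _ => hZDm i).const_smul ((n : ℝ))⁻¹
  have hGood : MeasurableSet {ω | ‖((m + n : ℝ))⁻¹ • (∑ i : Fin (m + n), Zf i ω)
      + ((n : ℝ))⁻¹ • ∑ i ∈ S, ZD i ω‖ ≤ t₁ + t₂} :=
    measurableSet_le (hAmeas.add hBmeas).norm measurable_const
  -- complement is contained in the union of the bad events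
  have hsub : {ω | ‖((m + n : ℝ))⁻¹ • (∑ i : Fin (m + n), Zf i ω)
      + ((n : ℝ))⁻¹ • ∑ i ∈ S, ZD i ω‖ ≤ t₁ + t₂}ᶜ ⊆
      {ω | t₁ < ‖((m:ℝ) + n)⁻¹ • (∑ i ∈ Finset.univ, Zf i ω) - a‖}
      ∪ {ω | t₂ < ‖((n:ℝ))⁻¹ • (∑ i ∈ S, ZD i ω) - b‖} := by
    intro ω hω
    simp only [Set.mem_compl_iff, Set.mem_setOf_eq, not_le] at hω
    simp only [Set.mem_union, Set.mem_setOf_eq]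
    by_contra hcon
    push_neg at hcon
    obtain ⟨h1, h2⟩ := hcon
    have hPQ : ((m + n : ℝ))⁻¹ • (∑ i : Fin (m + n), Zf i ω)
        + ((n : ℝ))⁻¹ • ∑ i ∈ S, ZD i ω
        = (((m:ℝ) + n)⁻¹ • (∑ i ∈ Finset.univ, Zf i ω) - a)
          + (((n:ℝ))⁻¹ • (∑ i ∈ S, ZD i ω) - b) := by
      have h0 : a + b = 0 := hab
      calc ((m + n : ℝ))⁻¹ • (∑ i : Fin (m + n), Zf i ω)
          + ((n : ℝ))⁻¹ • ∑ i ∈ S, ZD i ω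
          = (((m:ℝ) + n)⁻¹ • (∑ i ∈ Finset.univ, Zf i ω) - a)
            + (((n:ℝ))⁻¹ • (∑ i ∈ S, ZD i ω) - b) + (a + b) := by abel
        _ = _ := by rw [h0, add_zero]
    rw [hPQ] at hω
    have hle := (norm_add_le _ _).trans (add_le_add h1 h2)
    linarith
  have hbad : μ ({ω | ‖((m + n : ℝ))⁻¹ • (∑ i : Fin (m + n), Zf i ω)
      + ((n : ℝ))⁻¹ • ∑ i ∈ S, ZD i ω‖ ≤ t₁ + t₂}ᶜ) ≤ ENNReal.ofReal δ := by
    refine (measure_mono hsub).trans ((measure_union_le _ _).trans ?_)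
    refine (add_le_add hb1 hb2).trans ?_
    rw [← ENNReal.ofReal_add (by positivity) (by positivity), inv_div, add_halves]
  have htot := measure_add_measure_compl (μ := μ) hGood
  rw [measure_univ] at htot
  rw [ENNReal.ofReal_sub _ hδ0.le, ENNReal.ofReal_one, tsub_le_iff_right, ← htot]
  exact add_le_add le_rfl hbad

end Helpers

/-- With probability at least `1 − δ`, the doubly robust gradient satisfies
`‖G_DR‖₂ ≤ √(2·E[‖G(X₁,f̂(X₁)) − E[G(X₁,f̂(X₁))]‖²/((m+n)δ))
  + √(2·E[‖D₁ − E[D₁]‖²]/(nδ))` where `D₁ = G(X₁,Y₁) − G(X₁,f̂(X₁))`. -/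
theorem doubly_robust_gradient_bound
    {Ω : Type*} [MeasurableSpace Ω] (μ : Measure Ω) [IsProbabilityMeasure μ]
    {𝒳 𝒴 : Type*} [MeasurableSpace 𝒳] [MeasurableSpace 𝒴]
    (m n d : ℕ) (hm : 0 < m) (hn : 0 < n) (hd : 0 < d)
    (δ : ℝ) (hδ0 : 0 < δ) (hδ1 : δ < 1)
    (X : Fin (m + n) → Ω → 𝒳) (Y : Fin (m + n) → Ω → 𝒴)
    (hXmeas : ∀ i, Measurable (X i)) (hYmeas : ∀ i, Measurable (Y i))
    (h_indep : iIndepFun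
      (fun i ω => (X i ω, Y i ω)) μ)
    (h_ident : ∀ i : Fin (m + n),
      IdentDistrib (fun ω => (X i ω, Y i ω))
        (fun ω => (X ⟨0, by omega⟩ ω, Y ⟨0, by omega⟩ ω)) μ μ)
    (f : 𝒳 → 𝒴) (hf : Measurable f)
    (G : 𝒳 × 𝒴 → EuclideanSpace ℝ (Fin d)) (hG : Measurable G)
    (hGf2 : MemLp (fun ω => G (X ⟨0, by omega⟩ ω, f (X ⟨0, by omega⟩ ω))) 2 μ)
    (hGY2 : MemLp (fun ω => G (X ⟨0, by omega⟩ ω, Y ⟨0, by omega⟩ ω)) 2 μ)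
    (hopt : (∫ ω, G (X ⟨0, by omega⟩ ω, Y ⟨0, by omega⟩ ω) ∂μ) = 0) :
    ENNReal.ofReal (1 - δ) ≤
      μ {ω | ‖((m + n : ℝ))⁻¹ • (∑ i : Fin (m + n), G (X i ω, f (X i ω)))
          + ((n : ℝ))⁻¹ • ∑ i ∈ Finset.univ.filter (fun i : Fin (m + n) => m ≤ (i : ℕ)),
              (G (X i ω, Y i ω) - G (X i ω, f (X i ω)))‖
        ≤ Real.sqrt (2 * (∫ ω, ‖G (X ⟨0, by omega⟩ ω, f (X ⟨0, by omega⟩ ω))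
              - ∫ ω', G (X ⟨0, by omega⟩ ω', f (X ⟨0, by omega⟩ ω')) ∂μ‖ ^ 2 ∂μ)
            / ((m + n : ℝ) * δ))
          + Real.sqrt (2 * (∫ ω, ‖(G (X ⟨0, by omega⟩ ω, Y ⟨0, by omega⟩ ω)
                - G (X ⟨0, by omega⟩ ω, f (X ⟨0, by omega⟩ ω)))
              - ∫ ω', (G (X ⟨0, by omega⟩ ω', Y ⟨0, by omega⟩ ω')
                - G (X ⟨0, by omega⟩ ω', f (X ⟨0, by omega⟩ ω'))) ∂μ‖ ^ 2 ∂μ)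
            / ((n : ℝ) * δ))} := by
  classical
  have hi0 : 0 < m + n := by omega
  have hgf : Measurable (fun p : 𝒳 × 𝒴 => G (p.1, f p.1)) :=
    hG.comp (measurable_fst.prodMk (hf.comp measurable_fst))
  have hgD : Measurable (fun p : 𝒳 × 𝒴 => G p - G (p.1, f p.1)) := hG.sub hgf
  have hidf : ∀ i : Fin (m + n),
      IdentDistrib (fun ω => G (X i ω, f (X i ω)))
        (fun ω => G (X (⟨0, hi0⟩ : Fin (m + n)) ω, f (X ⟨0, hi0⟩ ω))) μ μ :=
    fun i => (h_ident i).comp hgf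
  have hidD : ∀ i : Fin (m + n),
      IdentDistrib (fun ω => G (X i ω, Y i ω) - G (X i ω, f (X i ω)))
        (fun ω => G (X (⟨0, hi0⟩ : Fin (m + n)) ω, Y ⟨0, hi0⟩ ω)
          - G (X ⟨0, hi0⟩ ω, f (X ⟨0, hi0⟩ ω))) μ μ :=
    fun i => (h_ident i).comp hgD
  have hZf2 : ∀ i : Fin (m + n), MemLp (fun ω => G (X i ω, f (X i ω))) 2 μ :=
    fun i => (hidf i).symm.memLp_snd hGf2
  have hZD2 : ∀ i : Fin (m + n),
      MemLp (fun ω => G (X i ω, Y i ω) - G (X i ω, f (X i ω))) 2 μ :=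
    fun i => (hidD i).symm.memLp_snd (hGY2.sub hGf2)
  have hindf : ∀ i j : Fin (m + n), i ≠ j →
      IndepFun (fun ω => G (X i ω, f (X i ω))) (fun ω => G (X j ω, f (X j ω))) μ :=
    fun i j hij => (h_indep.indepFun hij).comp hgf hgf
  have hindD : ∀ i j : Fin (m + n), i ≠ j →
      IndepFun (fun ω => G (X i ω, Y i ω) - G (X i ω, f (X i ω)))
        (fun ω => G (X j ω, Y j ω) - G (X j ω, f (X j ω))) μ :=
    fun i j hij => (h_indep.indepFun hij).comp hgD hgD
  have hZfm : ∀ i : Fin (m + n), Measurable fun ω => G (X i ω, f (X i ω)) :=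
    fun i => hG.comp ((hXmeas i).prodMk (hf.comp (hXmeas i)))
  have hZDm : ∀ i : Fin (m + n),
      Measurable fun ω => G (X i ω, Y i ω) - G (X i ω, f (X i ω)) :=
    fun i => (hG.comp ((hXmeas i).prodMk (hYmeas i))).sub (hZfm i)
  have hab : (∫ ω, G (X (⟨0, hi0⟩ : Fin (m + n)) ω, f (X ⟨0, hi0⟩ ω)) ∂μ)
      + (∫ ω, (G (X (⟨0, hi0⟩ : Fin (m + n)) ω, Y ⟨0, hi0⟩ ω)
          - G (X ⟨0, hi0⟩ ω, f (X ⟨0, hi0⟩ ω))) ∂μ) = 0 := by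
    have hint1 : Integrable (fun ω => G (X (⟨0, hi0⟩ : Fin (m + n)) ω, Y ⟨0, hi0⟩ ω)) μ :=
      hGY2.integrable one_le_two
    have hint2 : Integrable (fun ω => G (X (⟨0, hi0⟩ : Fin (m + n)) ω, f (X ⟨0, hi0⟩ ω))) μ :=
      hGf2.integrable one_le_two
    rw [integral_sub hint1 hint2,
      show (∫ ω, G (X (⟨0, hi0⟩ : Fin (m + n)) ω, Y ⟨0, hi0⟩ ω) ∂μ) = 0 from hopt]
    abel
  exact final_helper hm hn hδ0 hδ1
    (fun i ω => G (X i ω, f (X i ω)))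
    (fun i ω => G (X i ω, Y i ω) - G (X i ω, f (X i ω)))
    ⟨0, hi0⟩ hZfm hZDm hZf2 hZD2 hindf hindD hidf hidD hab
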